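/- Let A be a commutative ring, Ā a commutative A-algebra, and let n ≥ 1 be an integer. Let f : C → B and f' : C' → B be surjective A-algebra homomorphisms such that Tor_q^A(C, Ā) = 0 and Tor_q^A(C', Ā) = 0 for all q with 0 < q ≤ n − 1, and Tor_q^A(B, Ā) = 0 for all q with 0 < q ≤ n. Then Tor_q^A(C ×_B C', Ā) = 0 for all q with 0 < q ≤ n − 1. -/

import Mathlib

/-!
STATEMENT 4: If `f : C → B` and `f' : C' → B` are surjective `A`-algebra maps,
`Tor_q^A(C, Ā) = 0` and `Tor_q^A(C', Ā) = 0` for `0 < q ≤ n - 1`, and `Tor_q^A(B, Ā) = 0`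
for `0 < q ≤ n`, then `Tor_q^A(C ×_B C', Ā) = 0` for `0 < q ≤ n - 1`.
-/

open CategoryTheory Limits

/-- The fiber product `C ×_B C'` of `f : C → B`, `f' : C' → B`, as an `A`-subalgebra of
`C × C'`. -/
def fiberProduct (A B C C' : Type) [CommRing A] [CommRing B] [CommRing C] [CommRing C']
    [Algebra A B] [Algebra A C] [Algebra A C']
    (f : C →ₐ[A] B) (f' : C' →ₐ[A] B) : Subalgebra A (C × C') :=
  AlgHom.equalizer (f.comp (AlgHom.fst A C C')) (f'.comp (AlgHom.snd A C C'))


set_option maxHeartbeats 1000000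

namespace TorAux
noncomputable section
open MonoidalCategory

variable {A : Type} [CommRing A]

lemma tensoredShortExact (M : ModuleCat A) (S : ShortComplex (ModuleCat A)) (hS : S.ShortExact)
    (P : ProjectiveResolution M) :
    (ShortComplex.mk
      ((NatTrans.mapHomologicalComplex ((tensoringLeft (ModuleCat A)).map S.f)
        (ComplexShape.down ℕ)).app P.complex)
      ((NatTrans.mapHomologicalComplex ((tensoringLeft (ModuleCat A)).map S.g)
        (ComplexShape.down ℕ)).app P.complex)
      (by ext i : 1; simp [← comp_whiskerRight, S.zero]; exact (comp_whiskerRight S.f S.g (P.complex.X i)).symm.trans (by rw [S.zero]; simp; rfl))).ShortExact := by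
  rw [HomologicalComplex.shortExact_iff_degreewise_shortExact]
  intro i
  have hproj := P.projective i
  have : Module.Projective A (P.complex.X i) := (IsProjective.iff_projective (P.complex.X i)).mpr hproj
  have h : Module.Flat A (P.complex.X i) := inferInstance
  have e : ((ShortComplex.mk
      ((NatTrans.mapHomologicalComplex ((tensoringLeft (ModuleCat A)).map S.f)
        (ComplexShape.down ℕ)).app P.complex)
      ((NatTrans.mapHomologicalComplex ((tensoringLeft (ModuleCat A)).map S.g)
        (ComplexShape.down ℕ)).app P.complex)
      (by ext i : 1; simp [← comp_whiskerRight, S.zero]; exact (comp_whiskerRight S.f S.g (P.complex.X i)).symm.trans (by rw [S.zero]; simp; rfl))).map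
        (HomologicalComplex.eval (ModuleCat A) (ComplexShape.down ℕ) i))
      = S.map (tensorRight (P.complex.X i)) := rfl
  rw [e]
  have hexact := Module.Flat.rTensor_shortComplex_exact (P.complex.X i) S hS.exact
  have hmono : Mono ((tensorRight (P.complex.X i)).map S.f) := by
    rw [ModuleCat.mono_iff_injective]
    have := hS.mono_f
    exact Module.Flat.rTensor_preserves_injective_linearMap S.f.hom
      ((ModuleCat.mono_iff_injective S.f).mp this)
  have hepi : Epi ((tensorRight (P.complex.X i)).map S.g) := by
    rw [ModuleCat.epi_iff_surjective]
    have := hS.epi_g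
    exact LinearMap.rTensor_surjective (g := S.g.hom) _ ((ModuleCat.epi_iff_surjective S.g).mp this)
  exact { exact := hexact, mono_f := hmono, epi_g := hepi }

lemma isZero_tor_X₁ (M : ModuleCat A) (S : ShortComplex (ModuleCat A)) (hS : S.ShortExact)
    (q : ℕ)
    (h3 : IsZero (((Tor (ModuleCat A) (q+1)).obj S.X₃).obj M))
    (h2 : IsZero (((Tor (ModuleCat A) q).obj S.X₂).obj M)) :
    IsZero (((Tor (ModuleCat A) q).obj S.X₁).obj M) := by
  obtain ⟨P⟩ : Nonempty (ProjectiveResolution M) := HasProjectiveResolution.out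
  have hT := tensoredShortExact M S hS P
  have hij : (ComplexShape.down ℕ).Rel (q+1) q := rfl
  have hex := hT.homology_exact₁ (q+1) q hij
  refine IsZero.of_iso ?_ (P.isoLeftDerivedObj ((tensoringLeft (ModuleCat A)).obj S.X₁) q)
  refine hex.isZero_X₂ ?_ ?_
  · apply IsZero.eq_zero_of_src
    exact IsZero.of_iso h3
      (P.isoLeftDerivedObj ((tensoringLeft (ModuleCat A)).obj S.X₃) (q+1)).symm
  · apply IsZero.eq_zero_of_tgt
    exact IsZero.of_iso h2
      (P.isoLeftDerivedObj ((tensoringLeft (ModuleCat A)).obj S.X₂) q).symm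

lemma isZero_tor_X₂ (M : ModuleCat A) (S : ShortComplex (ModuleCat A)) (hS : S.ShortExact)
    (q : ℕ)
    (h1 : IsZero (((Tor (ModuleCat A) q).obj S.X₁).obj M))
    (h3 : IsZero (((Tor (ModuleCat A) q).obj S.X₃).obj M)) :
    IsZero (((Tor (ModuleCat A) q).obj S.X₂).obj M) := by
  obtain ⟨P⟩ : Nonempty (ProjectiveResolution M) := HasProjectiveResolution.out
  have hT := tensoredShortExact M S hS P
  have hex := hT.homology_exact₂ q
  refine IsZero.of_iso ?_ (P.isoLeftDerivedObj ((tensoringLeft (ModuleCat A)).obj S.X₂) q)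
  refine hex.isZero_X₂ ?_ ?_
  · apply IsZero.eq_zero_of_src
    exact IsZero.of_iso h1
      (P.isoLeftDerivedObj ((tensoringLeft (ModuleCat A)).obj S.X₁) q).symm
  · apply IsZero.eq_zero_of_tgt
    exact IsZero.of_iso h3
      (P.isoLeftDerivedObj ((tensoringLeft (ModuleCat A)).obj S.X₃) q).symm

end
end TorAux

theorem tor_fiberProduct_vanishing
    (A Abar B C C' : Type) [CommRing A] [CommRing Abar] [CommRing B] [CommRing C] [CommRing C']
    [Algebra A Abar] [Algebra A B] [Algebra A C] [Algebra A C']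
    (n : ℕ) (hn : 1 ≤ n)
    (f : C →ₐ[A] B) (f' : C' →ₐ[A] B)
    (hf : Function.Surjective f) (hf' : Function.Surjective f')
    (hC : ∀ q : ℕ, 0 < q → q ≤ n - 1 →
      IsZero (((Tor (ModuleCat A) q).obj (ModuleCat.of A C)).obj (ModuleCat.of A Abar)))
    (hC' : ∀ q : ℕ, 0 < q → q ≤ n - 1 →
      IsZero (((Tor (ModuleCat A) q).obj (ModuleCat.of A C')).obj (ModuleCat.of A Abar)))
    (hB : ∀ q : ℕ, 0 < q → q ≤ n →
      IsZero (((Tor (ModuleCat A) q).obj (ModuleCat.of A B)).obj (ModuleCat.of A Abar))) :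
    ∀ q : ℕ, 0 < q → q ≤ n - 1 →
      IsZero (((Tor (ModuleCat A) q).obj
        (ModuleCat.of A (fiberProduct A B C C' f f'))).obj (ModuleCat.of A Abar)) := by
  intro q hq hqn
  have hq1 : q + 1 ≤ n := by omega
  -- SES 1: 0 → ker f' → C' → B → 0
  let S1 : ShortComplex (ModuleCat A) :=
    ShortComplex.mk (X₁ := ModuleCat.of A (LinearMap.ker f'.toLinearMap))
      (X₂ := ModuleCat.of A C') (X₃ := ModuleCat.of A B)
      (ModuleCat.ofHom (LinearMap.ker f'.toLinearMap).subtype) (ModuleCat.ofHom f'.toLinearMap)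
      (by ext x; exact x.2)
  have hS1 : S1.ShortExact := by
    refine { exact := ?_, mono_f := ?_, epi_g := ?_ }
    · rw [ShortComplex.moduleCat_exact_iff]
      intro x hx
      exact ⟨⟨x, hx⟩, rfl⟩
    · rw [ModuleCat.mono_iff_injective]
      exact Subtype.val_injective
    · rw [ModuleCat.epi_iff_surjective]
      exact hf'
  have hK : IsZero (((Tor (ModuleCat A) q).obj
      (ModuleCat.of A (LinearMap.ker f'.toLinearMap))).obj (ModuleCat.of A Abar)) :=
    TorAux.isZero_tor_X₁ (ModuleCat.of A Abar) S1 hS1 q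
      (hB (q+1) (Nat.succ_pos q) hq1) (hC' q hq hqn)
  -- SES 2: 0 → ker p → fiberProduct → C → 0
  let p : ModuleCat.of A (fiberProduct A B C C' f f') ⟶ ModuleCat.of A C :=
    ModuleCat.ofHom ((LinearMap.fst A C C').comp (fiberProduct A B C C' f f').val.toLinearMap)
  let S2 : ShortComplex (ModuleCat A) :=
    ShortComplex.mk (X₁ := ModuleCat.of A (LinearMap.ker p.hom))
      (ModuleCat.ofHom (LinearMap.ker p.hom).subtype) p (by ext x; exact x.2)
  have hS2 : S2.ShortExact := by
    refine { exact := ?_, mono_f := ?_, epi_g := ?_ }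
    · rw [ShortComplex.moduleCat_exact_iff]
      intro x hx
      exact ⟨⟨x, hx⟩, rfl⟩
    · rw [ModuleCat.mono_iff_injective]
      exact Subtype.val_injective
    · rw [ModuleCat.epi_iff_surjective]
      intro c
      obtain ⟨c', hc'⟩ := hf' (f c)
      exact ⟨⟨(c, c'), hc'.symm⟩, rfl⟩
  -- ker p ≃ₗ[A] ker f'
  let φ : LinearMap.ker p.hom →ₗ[A] LinearMap.ker f'.toLinearMap :=
    { toFun := fun x => ⟨(x.1.1 : C × C').2, by
        have hx : (x.1.1 : C × C').1 = 0 := x.2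
        have hm : f (x.1.1 : C × C').1 = f' (x.1.1 : C × C').2 := x.1.2
        simp only [LinearMap.mem_ker]
        show f' (x.1.1 : C × C').2 = 0
        rw [← hm, hx, map_zero]⟩
      map_add' := fun x y => rfl
      map_smul' := fun a x => rfl }
  have hφ : Function.Bijective φ := by
    constructor
    · intro x y hxy
      have h2 : (x.1.1 : C × C').2 = (y.1.1 : C × C').2 := congrArg Subtype.val hxy
      have h1 : (x.1.1 : C × C').1 = (y.1.1 : C × C').1 := by
        rw [show ((x.1.1 : C × C').1 = 0) from x.2, show ((y.1.1 : C × C').1 = 0) from y.2]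
      ext : 1
      · exact Subtype.ext (Prod.ext h1 h2)
    · intro y
      refine ⟨⟨⟨(0, y.1), ?_⟩, rfl⟩, Subtype.ext rfl⟩
      show f 0 = f' y.1
      rw [map_zero, show f' y.1 = 0 from y.2]
  let e : LinearMap.ker p.hom ≃ₗ[A] LinearMap.ker f'.toLinearMap := LinearEquiv.ofBijective φ hφ
  have hK2 : IsZero (((Tor (ModuleCat A) q).obj
      (ModuleCat.of A (LinearMap.ker p.hom))).obj (ModuleCat.of A Abar)) :=
    IsZero.of_iso hK (((Tor (ModuleCat A) q).mapIso e.toModuleIso).app (ModuleCat.of A Abar))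
  exact TorAux.isZero_tor_X₂ (ModuleCat.of A Abar) S2 hS2 q hK2 (hC q hq hqn)
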